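/- Let 𝒩 be a nonempty set, k a field of characteristic 0, K = k((ε)), φ : 𝒩 → k extended additively to words, and T the K-valued mould with T^∅ = 1 and T^{n₁⋯n_r}(ε) = 1/((φ(n₁)+ε)⋯(φ(n₁)+⋯+φ(n_r)+rε)). Let (U_-, U_+) be the Birkhoff decomposition of T, let S be the k-valued mould with S^{n̲} := constant term (ε⁰-coefficient) of U_+^{n̲} (so S^∅ = 1 and S is invertible in the mould algebra k^𝒩̲), and define the k-valued mould R̃ := S × I_k × S⁻¹ − (∇_φ S) × S⁻¹. Then R̃^∅ = 0 and, for every nonempty word n̲, R̃^{n̲} = −r(n̲) · (residue of U_-^{n̲}), the residue being the coefficient of ε⁻¹. -/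

import Mathlib

open scoped Classical

/-- Shuffle coefficient: the number of ways the word `n` can be obtained by interleaving
the letters of `a` and `b` while preserving their internal orders. -/
noncomputable def sh {𝒩 : Type*} : List 𝒩 → List 𝒩 → List 𝒩 → ℕ
  | [], b, n => if b = n then 1 else 0
  | a, [], n => if a = n then 1 else 0
  | _ :: _, _ :: _, [] => 0
  | x :: a, y :: b, z :: n =>
      (if x = z then sh a (y :: b) n else 0) + (if y = z then sh (x :: a) b n else 0)

/-- Mould multiplication: `(M × N)^n = ∑_{n = a b} M^a N^b`. -/
noncomputable def mmul {𝒩 A : Type*} [Semiring A] (M N : List 𝒩 → A) : List 𝒩 → A :=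
  fun n => ∑ i ∈ Finset.range (n.length + 1), M (n.take i) * N (n.drop i)

/-- The unit mould `𝟙`. -/
noncomputable def munit {𝒩 A : Type*} [Semiring A] : List 𝒩 → A :=
  fun n => if n = [] then 1 else 0

/-- Membership in `K_- = ε⁻¹ k[ε⁻¹]`: all coefficients of nonnegative powers vanish. -/
def Kminus {k : Type*} [Field k] (f : LaurentSeries k) : Prop :=
  ∀ n : ℤ, 0 ≤ n → f.coeff n = 0

/-- Membership in `K_+ = k[[ε]]`: all coefficients of negative powers vanish. -/
def Kplus {k : Type*} [Field k] (f : LaurentSeries k) : Prop :=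
  ∀ n : ℤ, n < 0 → f.coeff n = 0

/-- Additive extension of `φ : 𝒩 → k` to words: `φ(n₁⋯n_r) = φ(n₁) + ⋯ + φ(n_r)`. -/
def phiw {𝒩 k : Type*} [AddCommMonoid k] (φ : 𝒩 → k) (l : List 𝒩) : k :=
  (l.map φ).sum

/-- The mould `I`: value `1` on words of length `1`, and `0` otherwise. -/
noncomputable def Imould {𝒩 A : Type*} [Semiring A] : List 𝒩 → A :=
  fun n => if n.length = 1 then 1 else 0

/-- The indeterminate `ε` of `K = k((ε))`. -/
noncomputable def eps (k : Type*) [Field k] : LaurentSeries k :=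
  HahnSeries.single (1 : ℤ) (1 : k)

/-- The mould `T`: `T^∅ = 1` and
`T^{n₁⋯n_r}(ε) = 1/((φ(n₁)+ε)(φ(n₁)+φ(n₂)+2ε)⋯(φ(n₁)+⋯+φ(n_r)+rε))`. -/
noncomputable def Tdef {𝒩 k : Type*} [Field k] (φ : 𝒩 → k) (l : List 𝒩) :
    LaurentSeries k :=
  (∏ i ∈ Finset.range l.length,
      ((HahnSeries.C (phiw φ (l.take (i + 1))) : LaurentSeries k) + (i + 1 : ℕ) • eps k))⁻¹

/-! ### Hahn series coefficient lemmas -/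

section Hahn
variable {k : Type*} [Field k]

/-- Nonpositive support. -/
def Dle (f : LaurentSeries k) : Prop := ∀ n : ℤ, 0 < n → f.coeff n = 0

lemma coeff_sum {α : Type*} (s : Finset α) (f : α → LaurentSeries k) (n : ℤ) :
    (∑ i ∈ s, f i).coeff n = ∑ i ∈ s, (f i).coeff n :=
  map_sum (HahnSeries.coeff.addMonoidHom n) f s

lemma mul_coeff_eq_zero (f g : LaurentSeries k) (n : ℤ)
    (h : ∀ a b : ℤ, a + b = n → f.coeff a = 0 ∨ g.coeff b = 0) : (f * g).coeff n = 0 := by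
  rw [HahnSeries.coeff_mul]
  refine Finset.sum_eq_zero fun ij hij => ?_
  rw [Finset.mem_addAntidiagonal] at hij
  rcases h ij.1 ij.2 hij.2.2 with h1 | h1 <;> simp [h1]

lemma Kminus.dle {f : LaurentSeries k} (h : Kminus f) : Dle f := fun n hn => h n hn.le

lemma Dle.mul {f g : LaurentSeries k} (hf : Dle f) (hg : Dle g) : Dle (f * g) := by
  intro n hn
  refine mul_coeff_eq_zero f g n fun a b hab => ?_
  rcases lt_or_ge 0 a with h | h
  · exact Or.inl (hf a h)
  · exact Or.inr (hg b (by omega))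

lemma Dle.mul_kminus {f g : LaurentSeries k} (hf : Dle f) (hg : Kminus g) : Kminus (f * g) := by
  intro n hn
  refine mul_coeff_eq_zero f g n fun a b hab => ?_
  rcases lt_or_ge 0 a with h | h
  · exact Or.inl (hf a h)
  · exact Or.inr (hg b (by omega))

lemma Kminus.mul_dle {f g : LaurentSeries k} (hf : Kminus f) (hg : Dle g) : Kminus (f * g) := by
  intro n hn
  refine mul_coeff_eq_zero f g n fun a b hab => ?_
  rcases le_or_gt 0 a with h | h
  · exact Or.inl (hf a h)
  · exact Or.inr (hg b (by omega))

lemma Kplus.mul {f g : LaurentSeries k} (hf : Kplus f) (hg : Kplus g) : Kplus (f * g) := by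
  intro n hn
  refine mul_coeff_eq_zero f g n fun a b hab => ?_
  rcases lt_or_ge a 0 with h | h
  · exact Or.inl (hf a h)
  · exact Or.inr (hg b (by omega))

lemma Kplus.one : Kplus (1 : LaurentSeries k) := by
  intro n hn
  rw [HahnSeries.coeff_one, if_neg (by omega)]

lemma Dle.one : Dle (1 : LaurentSeries k) := by
  intro n hn
  rw [HahnSeries.coeff_one, if_neg (by omega)]

lemma Kplus.neg {f : LaurentSeries k} (hf : Kplus f) : Kplus (-f) := by
  intro n hn; rw [HahnSeries.coeff_neg, hf n hn, neg_zero]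

lemma Kminus.neg {f : LaurentSeries k} (hf : Kminus f) : Kminus (-f) := by
  intro n hn; rw [HahnSeries.coeff_neg, hf n hn, neg_zero]

lemma Kplus.sum {α : Type*} {s : Finset α} {f : α → LaurentSeries k}
    (h : ∀ i ∈ s, Kplus (f i)) : Kplus (∑ i ∈ s, f i) := by
  intro n hn
  rw [coeff_sum]
  exact Finset.sum_eq_zero fun i hi => h i hi n hn

lemma Kminus.sum {α : Type*} {s : Finset α} {f : α → LaurentSeries k}
    (h : ∀ i ∈ s, Kminus (f i)) : Kminus (∑ i ∈ s, f i) := by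
  intro n hn
  rw [coeff_sum]
  exact Finset.sum_eq_zero fun i hi => h i hi n hn

lemma Dle.sum {α : Type*} {s : Finset α} {f : α → LaurentSeries k}
    (h : ∀ i ∈ s, Dle (f i)) : Dle (∑ i ∈ s, f i) := by
  intro n hn
  rw [coeff_sum]
  exact Finset.sum_eq_zero fun i hi => h i hi n hn

lemma C_mul_coeff (a : k) (f : LaurentSeries k) (n : ℤ) :
    ((HahnSeries.C a : LaurentSeries k) * f).coeff n = a * f.coeff n := by
  have : (HahnSeries.C a : LaurentSeries k) = HahnSeries.single 0 a := rfl
  rw [this, show n = n + 0 by ring, HahnSeries.coeff_single_mul_add]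
  simp

lemma smul_eps_eq (m : ℕ) : (m • eps k) = HahnSeries.single (1 : ℤ) (m : k) := by
  ext g
  rw [show (m • eps k).coeff g = m • (eps k).coeff g from
    map_nsmul (HahnSeries.coeff.addMonoidHom g) m (eps k)]
  simp only [eps, HahnSeries.coeff_single]
  split <;> simp

lemma smul_eps_mul_coeff (m : ℕ) (f : LaurentSeries k) (n : ℤ) :
    ((m • eps k) * f).coeff n = (m : k) * f.coeff (n - 1) := by
  rw [smul_eps_eq, show n = (n - 1) + 1 by ring, HahnSeries.coeff_single_mul_add]
  ring_nf

lemma const_of_coeffs {f : LaurentSeries k} (h : ∀ n : ℤ, n ≠ 0 → f.coeff n = 0) :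
    f = HahnSeries.C (f.coeff 0) := by
  ext g
  by_cases hg : g = 0
  · subst hg
    exact (HahnSeries.coeff_single_same 0 _).symm
  · rw [h g hg]
    exact (HahnSeries.coeff_single_of_ne hg).symm

end Hahn

/-! ### Mould algebra -/

section Mould
variable {𝒩 A : Type*} [CommRing A]

lemma mmul_def (M N : List 𝒩 → A) (n : List 𝒩) :
    mmul M N n = ∑ i ∈ Finset.range (n.length + 1), M (n.take i) * N (n.drop i) := rfl

lemma munit_mmul (M : List 𝒩 → A) : mmul munit M = M := by
  funext n
  rw [mmul_def]
  rw [Finset.sum_eq_single 0]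
  · simp [munit]
  · intro i hi h0
    have : n.take i ≠ [] := by
      intro h
      rw [Finset.mem_range] at hi
      rcases List.take_eq_nil_iff.mp h with rfl | rfl
      · exact h0 rfl
      · simp only [List.length_nil] at hi; omega
    simp [munit, this]
  · simp

lemma mmul_munit (M : List 𝒩 → A) : mmul M munit = M := by
  funext n
  rw [mmul_def]
  rw [Finset.sum_eq_single n.length]
  · simp [munit]
  · intro i hi h0
    have : n.drop i ≠ [] := by
      intro h
      rw [Finset.mem_range] at hi
      have := List.drop_eq_nil_iff.mp h
      omega
    simp [munit, this]
  · simp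

lemma mmul_assoc (M N P : List 𝒩 → A) : mmul (mmul M N) P = mmul M (mmul N P) := by
  funext n
  rw [mmul_def, mmul_def]
  have L : ∀ j ∈ Finset.range (n.length + 1),
      mmul M N (n.take j) * P (n.drop j)
        = ∑ i ∈ Finset.range (j + 1), M (n.take i) * N ((n.take j).drop i) * P (n.drop j) := by
    intro j hj
    rw [Finset.mem_range] at hj
    rw [mmul_def, Finset.sum_mul]
    rw [List.length_take, min_eq_left (by omega)]
    refine Finset.sum_congr rfl fun i hi => ?_
    rw [Finset.mem_range] at hi
    rw [List.take_take, min_eq_left (by omega)]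
  have R : ∀ i ∈ Finset.range (n.length + 1),
      M (n.take i) * mmul N P (n.drop i)
        = ∑ j ∈ Finset.range (n.length + 1 - i),
            M (n.take i) * N ((n.take (i + j)).drop i) * P (n.drop (i + j)) := by
    intro i hi
    rw [Finset.mem_range] at hi
    rw [mmul_def, Finset.mul_sum]
    rw [List.length_drop]
    have hlen : n.length - i + 1 = n.length + 1 - i := by omega
    rw [hlen]
    refine Finset.sum_congr rfl fun j hj => ?_
    rw [Finset.mem_range] at hj
    rw [List.drop_take, Nat.add_sub_cancel_left, List.drop_drop, mul_assoc]
  rw [Finset.sum_congr rfl L, Finset.sum_congr rfl R]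
  rw [Finset.sum_sigma', Finset.sum_sigma']
  refine Finset.sum_nbij' (fun p => ⟨p.2, p.1 - p.2⟩) (fun p => ⟨p.1 + p.2, p.1⟩) ?_ ?_ ?_ ?_ ?_
  · rintro ⟨j, i⟩ h
    simp only [Finset.mem_sigma, Finset.mem_range] at h ⊢
    omega
  · rintro ⟨i, j⟩ h
    simp only [Finset.mem_sigma, Finset.mem_range] at h ⊢
    omega
  · rintro ⟨j, i⟩ h
    simp only [Finset.mem_sigma, Finset.mem_range] at h
    simp only [Sigma.mk.inj_iff, heq_eq_eq]
    exact ⟨by omega, trivial⟩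
  · rintro ⟨i, j⟩ h
    simp only [Finset.mem_sigma, Finset.mem_range] at h
    simp only [Sigma.mk.inj_iff, heq_eq_eq]
    exact ⟨trivial, by omega⟩
  · rintro ⟨j, i⟩ h
    simp only [Finset.mem_sigma, Finset.mem_range] at h
    simp only
    have h1 : i + (j - i) = j := by omega
    rw [h1]

end Mould

/-! ### Mould inverses -/

section Minv
variable {𝒩 A : Type*} [CommRing A]

noncomputable def rinv (M : List 𝒩 → A) : List 𝒩 → A
  | [] => 1
  | x :: t => -∑ i ∈ Finset.range (t.length + 1),
      M ((x :: t).take (i + 1)) * rinv M (t.drop i)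
  termination_by n => n.length
  decreasing_by
    simp only [List.length_cons, List.length_drop]
    omega

noncomputable def linv (M : List 𝒩 → A) : List 𝒩 → A
  | [] => 1
  | x :: t => -∑ i ∈ Finset.range (t.length + 1),
      linv M ((x :: t).take (min i t.length)) * M ((x :: t).drop (min i t.length))
  termination_by n => n.length
  decreasing_by
    simp only [List.length_cons, List.length_take]
    omega

lemma mmul_rinv (M : List 𝒩 → A) (h1 : M [] = 1) : mmul M (rinv M) = munit := by
  funext n
  cases n with
  | nil => simp [mmul, munit, rinv, h1]
  | cons x t =>
    rw [mmul_def]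
    have hlen : (x :: t).length = t.length + 1 := rfl
    rw [hlen, Finset.sum_range_succ']
    simp only [List.take_zero, List.drop_zero, h1, one_mul]
    have hdrop : ∀ i : ℕ, (x :: t).drop (i + 1) = t.drop i := fun i => rfl
    have : ∑ i ∈ Finset.range (t.length + 1),
        M ((x :: t).take (i + 1)) * rinv M ((x :: t).drop (i + 1))
        = ∑ i ∈ Finset.range (t.length + 1),
          M ((x :: t).take (i + 1)) * rinv M (t.drop i) := by
      refine Finset.sum_congr rfl fun i _ => by rw [hdrop]
    rw [this, show rinv M (x :: t) = -∑ i ∈ Finset.range (t.length + 1),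
        M ((x :: t).take (i + 1)) * rinv M (t.drop i) from by rw [rinv]]
    simp [munit]

lemma linv_mmul (M : List 𝒩 → A) (h1 : M [] = 1) : mmul (linv M) M = munit := by
  funext n
  cases n with
  | nil => simp [mmul, munit, linv, h1]
  | cons x t =>
    rw [mmul_def]
    have hlen : (x :: t).length = t.length + 1 := rfl
    rw [hlen, Finset.sum_range_succ]
    have htake : (x :: t).take (t.length + 1) = x :: t := by
      apply List.take_of_length_le
      simp
    have hdropfull : (x :: t).drop (t.length + 1) = [] := by
      apply List.drop_eq_nil_iff.mpr
      simp
    rw [htake, hdropfull, h1, mul_one]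
    have : ∑ i ∈ Finset.range (t.length + 1),
        linv M ((x :: t).take i) * M ((x :: t).drop i)
        = ∑ i ∈ Finset.range (t.length + 1),
          linv M ((x :: t).take (min i t.length)) * M ((x :: t).drop (min i t.length)) := by
      refine Finset.sum_congr rfl fun i hi => ?_
      rw [Finset.mem_range] at hi
      rw [min_eq_left (by omega)]
    rw [this, show linv M (x :: t) = -∑ i ∈ Finset.range (t.length + 1),
        linv M ((x :: t).take (min i t.length)) * M ((x :: t).drop (min i t.length)) from by
      rw [linv]]
    simp [munit]

lemma rinv_mmul (M : List 𝒩 → A) (h1 : M [] = 1) : mmul (rinv M) M = munit := by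
  have key : linv M = rinv M := by
    calc linv M = mmul (linv M) munit := (mmul_munit _).symm
      _ = mmul (linv M) (mmul M (rinv M)) := by rw [mmul_rinv M h1]
      _ = mmul (mmul (linv M) M) (rinv M) := (mmul_assoc _ _ _).symm
      _ = mmul munit (rinv M) := by rw [linv_mmul M h1]
      _ = rinv M := munit_mmul _
  rw [← key]
  exact linv_mmul M h1

lemma rinv_nil (M : List 𝒩 → A) : rinv M [] = 1 := by rw [rinv]

end Minv

/-! ### Coefficient structure of mould inverses -/

section InvStruct
variable {𝒩 k : Type*} [Field k]

lemma rinv_cons_eq (M : List 𝒩 → LaurentSeries k) (x : 𝒩) (t : List 𝒩) :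
    rinv M (x :: t) = -∑ i ∈ Finset.range (t.length + 1),
      M ((x :: t).take (i + 1)) * rinv M (t.drop i) := by
  rw [rinv]

lemma take_succ_cons_ne_nil (x : 𝒩) (t : List 𝒩) (i : ℕ) : (x :: t).take (i + 1) ≠ [] := by
  simp [List.take_succ_cons]

lemma kminus_rinv_aux (M : List 𝒩 → LaurentSeries k) (h : ∀ n, n ≠ [] → Kminus (M n)) :
    ∀ (N : ℕ) (n : List 𝒩), n.length ≤ N → n ≠ [] → Kminus (rinv M n) := by
  intro N
  induction N with
  | zero =>
    rintro (_ | ⟨x, t⟩) hl hne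
    · exact absurd rfl hne
    · simp at hl
  | succ N ih =>
    rintro (_ | ⟨x, t⟩) hl hne
    · exact absurd rfl hne
    · rw [rinv_cons_eq]
      apply Kminus.neg
      apply Kminus.sum
      intro i _
      apply Kminus.mul_dle (h _ (take_succ_cons_ne_nil x t i))
      by_cases hd : t.drop i = []
      · rw [hd, rinv_nil]; exact Dle.one
      · refine (ih (t.drop i) ?_ hd).dle
        simp only [List.length_cons] at hl
        simp only [List.length_drop]
        omega

lemma kminus_rinv (M : List 𝒩 → LaurentSeries k) (h : ∀ n, n ≠ [] → Kminus (M n)) :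
    ∀ n : List 𝒩, n ≠ [] → Kminus (rinv M n) :=
  fun n => kminus_rinv_aux M h n.length n le_rfl

lemma kplus_rinv_aux (M : List 𝒩 → LaurentSeries k) (h : ∀ n, Kplus (M n)) :
    ∀ (N : ℕ) (n : List 𝒩), n.length ≤ N → Kplus (rinv M n) := by
  intro N
  induction N with
  | zero =>
    rintro (_ | ⟨x, t⟩) hl
    · rw [rinv_nil]; exact Kplus.one
    · simp at hl
  | succ N ih =>
    rintro (_ | ⟨x, t⟩) hl
    · rw [rinv_nil]; exact Kplus.one
    · rw [rinv_cons_eq]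
      apply Kplus.neg
      apply Kplus.sum
      intro i _
      apply Kplus.mul (h _)
      refine ih (t.drop i) ?_
      simp only [List.length_cons] at hl
      simp only [List.length_drop]
      omega

lemma kplus_rinv (M : List 𝒩 → LaurentSeries k) (h : ∀ n, Kplus (M n)) :
    ∀ n : List 𝒩, Kplus (rinv M n) :=
  fun n => kplus_rinv_aux M h n.length n le_rfl

end InvStruct

/-! ### The derivation and the equation for T -/

section Deriv
variable {𝒩 k : Type*} [Field k]

noncomputable def Dop (φ : 𝒩 → k) (M : List 𝒩 → LaurentSeries k) : List 𝒩 → LaurentSeries k :=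
  fun n => ((HahnSeries.C (phiw φ n) : LaurentSeries k) + n.length • eps k) * M n

lemma phiw_nil (φ : 𝒩 → k) : phiw φ ([] : List 𝒩) = 0 := rfl

lemma phiw_append (φ : 𝒩 → k) (a b : List 𝒩) :
    phiw φ (a ++ b) = phiw φ a + phiw φ b := by simp [phiw]

lemma Dop_nil (φ : 𝒩 → k) (M : List 𝒩 → LaurentSeries k) : Dop φ M [] = 0 := by
  simp [Dop, phiw]

lemma Dop_mmul (φ : 𝒩 → k) (M N : List 𝒩 → LaurentSeries k) (n : List 𝒩) :
    Dop φ (mmul M N) n = mmul (Dop φ M) N n + mmul M (Dop φ N) n := by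
  simp only [Dop, mmul_def, Finset.mul_sum, ← Finset.sum_add_distrib]
  refine Finset.sum_congr rfl fun i hi => ?_
  have h1 : phiw φ n = phiw φ (n.take i) + phiw φ (n.drop i) := by
    rw [← phiw_append, List.take_append_drop]
  have h2 : n.length = (n.take i).length + (n.drop i).length := by
    conv_lhs => rw [← List.take_append_drop i n]
    rw [List.length_append]
  rw [h1, h2, map_add, add_nsmul]
  rw [smul_eps_eq, smul_eps_eq]
  ring

variable [CharZero k]

lemma factor_ne_zero (a : k) (m : ℕ) :
    (HahnSeries.C a + (m + 1 : ℕ) • eps k : LaurentSeries k) ≠ 0 := by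
  intro h
  have hc := congrArg (fun f : LaurentSeries k => f.coeff 1) h
  simp only [HahnSeries.coeff_add, HahnSeries.coeff_zero] at hc
  rw [show (HahnSeries.C a : LaurentSeries k) = HahnSeries.single 0 a from rfl,
    HahnSeries.coeff_single_of_ne (by norm_num), smul_eps_eq,
    HahnSeries.coeff_single_same, zero_add] at hc
  exact (Nat.cast_ne_zero (R := k)).mpr (Nat.succ_ne_zero m) hc

lemma Tdef_nil (φ : 𝒩 → k) : Tdef φ ([] : List 𝒩) = 1 := by
  simp [Tdef]

lemma Dop_T (φ : 𝒩 → k) (n : List 𝒩) :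
    Dop φ (Tdef φ) n = mmul (Tdef φ) Imould n := by
  cases n with
  | nil =>
    rw [Dop_nil]
    rw [mmul_def]
    simp [Imould]
  | cons x t =>
    have hr : (x :: t).length = t.length + 1 := rfl
    -- right-hand side
    have hRHS : mmul (Tdef φ) Imould (x :: t) = Tdef φ ((x :: t).take t.length) := by
      rw [mmul_def, hr]
      rw [Finset.sum_eq_single t.length]
      · have : ((x :: t).drop t.length).length = 1 := by
          rw [List.length_drop, hr]; omega
        simp [Imould, this]
      · intro i hi h0
        rw [Finset.mem_range] at hi
        simp only [Imould, List.length_drop, hr]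
        rw [if_neg (by omega), mul_zero]
      · intro h
        exact absurd (Finset.mem_range.mpr (by omega)) h
    rw [hRHS]
    -- left-hand side
    set f : ℕ → LaurentSeries k := fun i =>
      (HahnSeries.C (phiw φ ((x :: t).take (i + 1))) : LaurentSeries k) + (i + 1 : ℕ) • eps k
      with hf
    have hTn : Tdef φ (x :: t) = (∏ i ∈ Finset.range (t.length + 1), f i)⁻¹ := rfl
    have hsplit : ∏ i ∈ Finset.range (t.length + 1), f i
        = (∏ i ∈ Finset.range t.length, f i) * f t.length := Finset.prod_range_succ f t.length
    have hg : f t.length = (HahnSeries.C (phiw φ (x :: t)) : LaurentSeries k)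
        + (x :: t).length • eps k := by
      rw [hf]
      simp only [hr]
      rw [List.take_of_length_le (by rw [hr])]
    have hgne : f t.length ≠ 0 := by
      rw [hf]
      exact factor_ne_zero _ _
    have hTtake : Tdef φ ((x :: t).take t.length)
        = (∏ i ∈ Finset.range t.length, f i)⁻¹ := by
      unfold Tdef
      congr 1
      rw [List.length_take, hr, min_eq_left (by omega)]
      refine Finset.prod_congr rfl fun i hi => ?_
      rw [Finset.mem_range] at hi
      rw [List.take_take, min_eq_left (by omega)]
    rw [Dop, ← hg, hTn, hsplit, mul_inv, ← mul_assoc, mul_comm (f t.length), mul_assoc,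
      mul_inv_cancel₀ hgne, mul_one, hTtake]

end Deriv

/-! ### Structure lemmas for derivation factors -/

section Fac
variable {𝒩 k : Type*} [Field k]

lemma Kplus.add {f g : LaurentSeries k} (hf : Kplus f) (hg : Kplus g) : Kplus (f + g) := by
  intro n hn; rw [HahnSeries.coeff_add, hf n hn, hg n hn, add_zero]

lemma Kplus.sub {f g : LaurentSeries k} (hf : Kplus f) (hg : Kplus g) : Kplus (f - g) := by
  rw [sub_eq_add_neg]; exact hf.add hg.neg

lemma Dle.zero : Dle (0 : LaurentSeries k) := fun n _ => HahnSeries.coeff_zero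

lemma Dfac_coeff (a : k) (l : ℕ) (u : LaurentSeries k) (n : ℤ) :
    (((HahnSeries.C a : LaurentSeries k) + l • eps k) * u).coeff n
      = a * u.coeff n + (l : k) * u.coeff (n - 1) := by
  rw [add_mul, HahnSeries.coeff_add, C_mul_coeff, smul_eps_mul_coeff]

lemma Dfac_dle (a : k) (l : ℕ) {u : LaurentSeries k} (hu : Kminus u) :
    Dle (((HahnSeries.C a : LaurentSeries k) + l • eps k) * u) := by
  intro n hn
  rw [Dfac_coeff, hu n (by omega), hu (n - 1) (by omega), mul_zero, mul_zero, add_zero]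

lemma Dfac_coeff0 (a : k) (l : ℕ) {u : LaurentSeries k} (hu : Kminus u) :
    (((HahnSeries.C a : LaurentSeries k) + l • eps k) * u).coeff 0
      = (l : k) * u.coeff (-1) := by
  rw [Dfac_coeff, hu 0 le_rfl, mul_zero, zero_add]
  norm_num

lemma Dfac_kplus (a : k) (l : ℕ) {u : LaurentSeries k} (hu : Kplus u) :
    Kplus (((HahnSeries.C a : LaurentSeries k) + l • eps k) * u) := by
  intro n hn
  rw [Dfac_coeff, hu n hn, hu (n - 1) (by omega), mul_zero, mul_zero, add_zero]

end Fac

/-- with `(U₋, U₊)` the Birkhoff decomposition of `T`,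
`S` the mould of constant terms of `U₊` (with inverse `S⁻¹` in the mould algebra) and
`R̃ = S × I × S⁻¹ − (∇_φ S) × S⁻¹`, one has `R̃^∅ = 0` and, for every nonempty word `n`,
`R̃^n = −r(n) · (residue of U₋^n)`. -/
theorem Rtilde_eq_residue
    {𝒩 k : Type*} [Nonempty 𝒩] [Field k] [CharZero k] (φ : 𝒩 → k)
    (Um Up : List 𝒩 → LaurentSeries k)
    (hUm0 : Um [] = 1) (hUp0 : Up [] = 1)
    (hUm : ∀ n : List 𝒩, n ≠ [] → Kminus (Um n))
    (hUp : ∀ n : List 𝒩, Kplus (Up n))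
    (hEq : mmul Um (Tdef φ) = Up)
    (S : List 𝒩 → k) (hS : S = fun n => (Up n).coeff 0)
    (Sinv : List 𝒩 → k)
    (hSinv : mmul S Sinv = munit ∧ mmul Sinv S = munit)
    (Rt : List 𝒩 → k)
    (hRt : Rt = fun n =>
      mmul (mmul S Imould) Sinv n - mmul (fun m => phiw φ m * S m) Sinv n) :
    Rt [] = 0 ∧
    ∀ n : List 𝒩, n ≠ [] → Rt n = -(n.length : k) * (Um n).coeff (-1) := by
  obtain ⟨hSr, hSl⟩ := hSinv
  set Vm : List 𝒩 → LaurentSeries k := rinv Um with hVm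
  set Vp : List 𝒩 → LaurentSeries k := rinv Up with hVp
  have hUmVm : mmul Um Vm = munit := mmul_rinv Um hUm0
  have hVmUm : mmul Vm Um = munit := rinv_mmul Um hUm0
  have hUpVp : mmul Up Vp = munit := mmul_rinv Up hUp0
  have hVmKm : ∀ n : List 𝒩, n ≠ [] → Kminus (Vm n) := kminus_rinv Um hUm
  have hVpKp : ∀ n : List 𝒩, Kplus (Vp n) := kplus_rinv Up hUp
  set W : List 𝒩 → LaurentSeries k := mmul (Dop φ Um) Vm with hW
  -- Step 1 : mmul W Up = Dop Up - Up × I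
  have hDUp : ∀ n, Dop φ Up n = mmul (Dop φ Um) (Tdef φ) n + mmul Up Imould n := by
    intro n
    conv_lhs => rw [← hEq]
    rw [Dop_mmul]
    congr 1
    have h0 : Dop φ (Tdef φ) = mmul (Tdef φ) Imould := funext (Dop_T φ)
    rw [h0, ← mmul_assoc, hEq]
  have hWUp : mmul W Up = fun n => Dop φ Up n - mmul Up Imould n := by
    have : mmul W Up = mmul (Dop φ Um) (Tdef φ) := by
      conv_lhs => rw [hW, ← hEq, mmul_assoc, ← mmul_assoc Vm, hVmUm, munit_mmul]
    rw [this]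
    funext n
    rw [hDUp n]
    ring
  -- Step 2 : coefficient structure of W from the minus side
  have hWdle : ∀ n : List 𝒩, Dle (W n) := by
    intro n
    rw [hW, mmul_def]
    apply Dle.sum
    intro i hi
    rw [Finset.mem_range] at hi
    rcases Nat.eq_zero_or_pos i with rfl | hipos
    · simp only [List.take_zero, Dop_nil, zero_mul]
      exact Dle.zero
    · have htk : n.take i ≠ [] := by
        intro hnil
        rcases List.take_eq_nil_iff.mp hnil with rfl | rfl
        · omega
        · simp at hi; omega
      have hdop : Dle (Dop φ Um (n.take i)) := Dfac_dle _ _ (hUm _ htk)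
      apply hdop.mul
      by_cases hd : n.drop i = []
      · rw [hd, hVm, rinv_nil]; exact Dle.one
      · exact (hVmKm _ hd).dle
  have hWc0 : ∀ n : List 𝒩, n ≠ [] → (W n).coeff 0 = (n.length : k) * (Um n).coeff (-1) := by
    intro n hn
    rw [hW, mmul_def, coeff_sum]
    rw [Finset.sum_eq_single n.length]
    · rw [List.take_length, List.drop_length, hVm, rinv_nil, mul_one]
      exact Dfac_coeff0 _ _ (hUm n hn)
    · intro i hi h0
      rw [Finset.mem_range] at hi
      rcases Nat.eq_zero_or_pos i with rfl | hipos
      · simp [Dop_nil]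
      · have htk : n.take i ≠ [] := by
          intro hnil
          rcases List.take_eq_nil_iff.mp hnil with rfl | rfl
          · omega
          · simp at hi; omega
        have hd : n.drop i ≠ [] := by
          intro hnil
          have := List.drop_eq_nil_iff.mp hnil
          omega
        exact (Dle.mul_kminus (Dfac_dle _ _ (hUm _ htk)) (hVmKm _ hd)) 0 le_rfl
    · intro h
      exact absurd (Finset.mem_range.mpr (by omega)) h
  -- Step 3 : W is K₊-valued (from the plus side)
  have hWKp : ∀ n : List 𝒩, Kplus (W n) := by
    have hWeq : W = mmul (fun n => Dop φ Up n - mmul Up Imould n) Vp := by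
      calc W = mmul W munit := (mmul_munit W).symm
        _ = mmul W (mmul Up Vp) := by rw [hUpVp]
        _ = mmul (mmul W Up) Vp := (mmul_assoc _ _ _).symm
        _ = mmul (fun n => Dop φ Up n - mmul Up Imould n) Vp := by rw [hWUp]
    intro n
    rw [hWeq, mmul_def]
    apply Kplus.sum
    intro i _
    apply Kplus.mul _ (hVpKp _)
    apply Kplus.sub (Dfac_kplus _ _ (hUp _))
    rw [mmul_def]
    apply Kplus.sum
    intro j _
    apply Kplus.mul (hUp _)
    unfold Imould
    split
    · exact Kplus.one
    · intro m hm; rw [HahnSeries.coeff_zero]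
  -- W is a constant series
  have hWconst : ∀ n : List 𝒩, W n = HahnSeries.C ((W n).coeff 0) := by
    intro n
    apply const_of_coeffs
    intro m hm
    rcases lt_or_gt_of_ne hm with h | h
    · exact hWKp n m h
    · exact hWdle n m h
  set w : List 𝒩 → k := fun m => (W m).coeff 0 with hw
  have hwnil : w [] = 0 := by
    rw [hw]
    simp only
    rw [hW, mmul_def]
    simp [Dop_nil]
  -- Step 4 : constant terms
  have hF : ∀ n : List 𝒩, mmul w S n = phiw φ n * S n - mmul S Imould n := by
    intro n
    have h1 : (mmul W Up n).coeff 0 = (Dop φ Up n - mmul Up Imould n).coeff 0 := by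
      rw [hWUp]
    rw [mmul_def, coeff_sum] at h1
    have hL : ∀ i ∈ Finset.range (n.length + 1),
        (W (n.take i) * Up (n.drop i)).coeff 0 = w (n.take i) * S (n.drop i) := by
      intro i _
      conv_lhs => rw [hWconst (n.take i)]
      rw [C_mul_coeff, hS]
    rw [Finset.sum_congr rfl hL] at h1
    have hR1 : (Dop φ Up n).coeff 0 = phiw φ n * S n := by
      have : (Dop φ Up n).coeff 0
          = phiw φ n * (Up n).coeff 0 + (n.length : k) * (Up n).coeff (0 - 1) := by
        exact Dfac_coeff _ _ _ 0
      rw [this, hS]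
      have : (Up n).coeff (0 - 1) = 0 := hUp n (0 - 1) (by norm_num)
      rw [this, mul_zero, add_zero]
    have hR2 : (mmul Up Imould n).coeff 0 = mmul S Imould n := by
      rw [mmul_def, coeff_sum, mmul_def]
      refine Finset.sum_congr rfl fun i _ => ?_
      unfold Imould
      split
      · rw [mul_one, mul_one, hS]
      · rw [mul_zero, mul_zero, HahnSeries.coeff_zero]
    rw [HahnSeries.coeff_sub, hR1, hR2] at h1
    rw [mmul_def]
    exact h1
  -- Step 5 : solve for w
  have hwS : mmul w S = fun n => phiw φ n * S n - mmul S Imould n := funext hF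
  have hw_final : w = fun n =>
      mmul (fun m => phiw φ m * S m) Sinv n - mmul (mmul S Imould) Sinv n := by
    calc w = mmul w munit := (mmul_munit w).symm
      _ = mmul w (mmul S Sinv) := by rw [hSr]
      _ = mmul (mmul w S) Sinv := (mmul_assoc _ _ _).symm
      _ = mmul (fun n => phiw φ n * S n - mmul S Imould n) Sinv := by rw [hwS]
      _ = fun n => mmul (fun m => phiw φ m * S m) Sinv n - mmul (mmul S Imould) Sinv n := by
          funext n
          rw [mmul_def, mmul_def, mmul_def, ← Finset.sum_sub_distrib]
          exact Finset.sum_congr rfl fun i _ => by rw [sub_mul]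
  have hRtw : ∀ n : List 𝒩, Rt n = -(w n) := by
    intro n
    rw [hRt, hw_final]
    simp only
    ring
  constructor
  · rw [hRtw, hwnil, neg_zero]
  · intro n hn
    rw [hRtw, hw]
    simp only
    rw [hWc0 n hn, neg_mul]
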